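/- Let d ≥ K ≥ 2 and let M ∈ ℝ^{d×K} be a matrix whose columns sum to zero, i.e., M·1_K = 0. Let U' = sqrt((K−1)/K) · M · P_K where P_K = I_K − (1/K)·1_K·1_Kᵀ, and let U' = W Σ Vᵀ be a thin singular value decomposition (W ∈ ℝ^{d×K} with WᵀW = I_K, V ∈ ℝ^{K×K} orthogonal, Σ ∈ ℝ^{K×K} diagonal with nonnegative entries). Define E* = sqrt(K/(K−1)) · (W Vᵀ) · P_K. Then for every matrix U ∈ ℝ^{d×K} with orthonormal columns (UᵀU = I_K), setting E = sqrt(K/(K−1)) · U · P_K, one has ‖M − E*‖_F ≤ ‖M − E‖_F. That is, E* is a simplex ETF matrix nearest to M in Frobenius norm among all simplex ETF matrices constructed from orthonormal-column matrices U. -/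

import Mathlib

open Matrix

/-- Frobenius norm of a real matrix: ‖A‖_F = sqrt(tr(AᵀA)). -/
noncomputable def frobNorm {d K : ℕ} (A : Matrix (Fin d) (Fin K) ℝ) : ℝ :=
  Real.sqrt ((Aᵀ * A).trace)

/-- Centering matrix P_K = I_K − (1/K)·1_K·1_Kᵀ. -/
noncomputable def centering (K : ℕ) : Matrix (Fin K) (Fin K) ℝ :=
  1 - (K : ℝ)⁻¹ • Matrix.of (fun _ _ => (1 : ℝ))

lemma centering_transpose (K : ℕ) : (centering K)ᵀ = centering K := by
  unfold centering
  ext i j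
  simp [Matrix.transpose_apply, Matrix.one_apply, Matrix.sub_apply]
  rcases eq_or_ne i j with h | h
  · simp [h]
  · simp [h, Ne.symm h]

lemma centering_mul_self {K : ℕ} (hK : 1 ≤ K) :
    centering K * centering K = centering K := by
  have hKne : (K : ℝ) ≠ 0 := by
    have : 0 < K := hK
    positivity
  ext i j
  simp only [centering, Matrix.mul_apply, Matrix.sub_apply, Matrix.smul_apply,
    Matrix.one_apply, Matrix.of_apply, smul_eq_mul, mul_one, sub_mul, mul_sub]
  rw [Finset.sum_sub_distrib, Finset.sum_sub_distrib]
  simp only [Finset.sum_ite_eq, Finset.sum_ite_eq', Finset.mem_univ, if_true,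
    Finset.sum_const, Finset.card_univ, Fintype.card_fin, nsmul_eq_mul, mul_ite]
  rcases eq_or_ne i j with h | h
  · simp [h]
    field_simp
    ring
  · simp [h]
    field_simp
    ring

lemma centering_trace {K : ℕ} (hK : 1 ≤ K) : (centering K).trace = (K : ℝ) - 1 := by
  unfold centering
  have h : 0 < K := hK
  have hKne : (K : ℝ) ≠ 0 := by positivity
  rw [Matrix.trace_sub, Matrix.trace_smul, Matrix.trace_one]
  have : ((Matrix.of (fun _ _ => (1 : ℝ)) : Matrix (Fin K) (Fin K) ℝ)).trace = (K : ℝ) := by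
    simp [Matrix.trace, Matrix.diag]
  rw [this]
  field_simp
  simp [hKne]

lemma diag_le_one {d K : ℕ} (A B : Matrix (Fin d) (Fin K) ℝ)
    (hA : Aᵀ * A = 1) (hB : Bᵀ * B = 1) (i : Fin K) :
    (Aᵀ * B) i i ≤ 1 := by
  have hA1 : ∑ k, A k i ^ 2 = 1 := by
    have := congrFun (congrFun hA i) i
    simpa [Matrix.mul_apply, Matrix.one_apply, pow_two] using this
  have hB1 : ∑ k, B k i ^ 2 = 1 := by
    have := congrFun (congrFun hB i) i
    simpa [Matrix.mul_apply, Matrix.one_apply, pow_two] using this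
  have hcs := Finset.sum_mul_sq_le_sq_mul_sq Finset.univ (fun k => A k i) (fun k => B k i)
  rw [hA1, hB1, one_mul] at hcs
  have : (Aᵀ * B) i i = ∑ k, A k i * B k i := by
    simp [Matrix.mul_apply]
  rw [this]
  nlinarith [hcs]

lemma trace_SQ_le {K : ℕ} (S Q : Matrix (Fin K) (Fin K) ℝ)
    (hS : S.IsDiag) (hSnn : ∀ i, 0 ≤ S i i) (hQ : ∀ i, Q i i ≤ 1) :
    (S * Q).trace ≤ S.trace := by
  rw [Matrix.trace, Matrix.trace]
  apply Finset.sum_le_sum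
  intro i _
  have : (S * Q).diag i = ∑ j, S i j * Q j i := by simp [Matrix.mul_apply]
  rw [this, Finset.sum_eq_single i]
  · calc S i i * Q i i ≤ S i i * 1 := mul_le_mul_of_nonneg_left (hQ i) (hSnn i)
      _ = S.diag i := mul_one _
  · intro j _ hj
    rw [hS (Ne.symm hj), zero_mul]
  · intro h; exact absurd (Finset.mem_univ i) h

theorem nearest_simplex_ETF (d K : ℕ) (hK : 2 ≤ K) (hdK : K ≤ d)
    (M : Matrix (Fin d) (Fin K) ℝ)
    (hM : M *ᵥ (fun _ => (1 : ℝ)) = 0)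
    (W : Matrix (Fin d) (Fin K) ℝ) (S V : Matrix (Fin K) (Fin K) ℝ)
    (hW : Wᵀ * W = 1) (hV : Vᵀ * V = 1)
    (hS : S.IsDiag) (hSnonneg : ∀ i, 0 ≤ S i i)
    (hSVD : Real.sqrt (((K : ℝ) - 1) / K) • (M * centering K) = W * S * Vᵀ)
    (Estar : Matrix (Fin d) (Fin K) ℝ)
    (hEstar : Estar = Real.sqrt ((K : ℝ) / ((K : ℝ) - 1)) • ((W * Vᵀ) * centering K)) :
    ∀ U : Matrix (Fin d) (Fin K) ℝ, Uᵀ * U = 1 →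
      frobNorm (M - Estar) ≤
        frobNorm (M - Real.sqrt ((K : ℝ) / ((K : ℝ) - 1)) • (U * centering K)) := by
  intro U hU
  set P := centering K with hPdef
  set a := Real.sqrt ((K : ℝ) / ((K : ℝ) - 1)) with hadef
  set c := Real.sqrt (((K : ℝ) - 1) / K) with hcdef
  have hK1 : (1 : ℝ) ≤ (K : ℝ) := by exact_mod_cast Nat.one_le_of_lt hK
  have hK2 : (2 : ℝ) ≤ (K : ℝ) := by exact_mod_cast hK
  have hKpos : (0 : ℝ) < K := by linarith
  have hKm1pos : (0 : ℝ) < (K : ℝ) - 1 := by linarith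
  have hPt : Pᵀ = P := centering_transpose K
  have hPP : P * P = P := centering_mul_self (by omega)
  have htrP : P.trace = (K : ℝ) - 1 := centering_trace (by omega)
  -- M * P = M
  have hMJ : M * (Matrix.of (fun _ _ => (1 : ℝ)) : Matrix (Fin K) (Fin K) ℝ) = 0 := by
    ext i j
    have := congrFun hM i
    simpa [Matrix.mul_apply, Matrix.mulVec, dotProduct] using this
  have hMP : M * P = M := by
    rw [hPdef]
    unfold centering
    rw [Matrix.mul_sub, Matrix.mul_one, Matrix.mul_smul, hMJ, smul_zero, sub_zero]
  have ha_nonneg : 0 ≤ a := Real.sqrt_nonneg _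
  have ha2 : a * a = (K : ℝ) / ((K : ℝ) - 1) := by
    rw [hadef, Real.mul_self_sqrt (by positivity)]
  have hcpos : 0 < c := Real.sqrt_pos.mpr (by positivity)
  have hcM : c • M = W * S * Vᵀ := by rw [← hSVD, hMP]
  have hSt : Sᵀ = S := by
    ext i j
    rcases eq_or_ne i j with h | h
    · rw [h]; rfl
    · rw [Matrix.transpose_apply, hS h, hS (Ne.symm h)]
  -- key trace expansion
  have key : ∀ X : Matrix (Fin d) (Fin K) ℝ, Xᵀ * X = 1 →
      ((M - a • (X * P))ᵀ * (M - a • (X * P))).trace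
        = (Mᵀ * M).trace + (K : ℝ) - 2 * a * (Mᵀ * X).trace := by
    intro X hX
    have hT : (M - a • (X * P))ᵀ = Mᵀ - a • (Pᵀ * Xᵀ) := by
      rw [Matrix.transpose_sub, Matrix.transpose_smul, Matrix.transpose_mul]
    rw [hT, Matrix.sub_mul, Matrix.mul_sub, Matrix.mul_sub, Matrix.trace_sub,
      Matrix.trace_sub, Matrix.trace_sub]
    have h1 : (Mᵀ * (a • (X * P))).trace = a * (Mᵀ * X).trace := by
      rw [Matrix.mul_smul, Matrix.trace_smul, smul_eq_mul]
      congr 1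
      rw [← Matrix.mul_assoc, Matrix.trace_mul_cycle]
      have : P * Mᵀ = Mᵀ := by
        rw [← hPt, ← Matrix.transpose_mul, hMP]
      rw [this]
    have h2 : ((a • (Pᵀ * Xᵀ)) * M).trace = a * (Mᵀ * X).trace := by
      rw [Matrix.smul_mul, Matrix.trace_smul, smul_eq_mul]
      congr 1
      rw [hPt, Matrix.mul_assoc, Matrix.trace_mul_comm]
      have hPM : (Xᵀ * M)ᵀ = Mᵀ * X := by
        rw [Matrix.transpose_mul, Matrix.transpose_transpose]
      calc (Xᵀ * M * P).trace = (P * (Xᵀ * M)).trace := Matrix.trace_mul_comm _ _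
        _ = ((Xᵀ * M)ᵀ * Pᵀ).trace := by rw [← Matrix.transpose_mul, Matrix.trace_transpose]
        _ = (Mᵀ * X * P).trace := by rw [hPM, hPt]
        _ = (P * (Mᵀ * X)).trace := Matrix.trace_mul_comm _ _
        _ = (Mᵀ * X).trace := by
            have : P * Mᵀ = Mᵀ := by rw [← hPt, ← Matrix.transpose_mul, hMP]
            rw [← Matrix.mul_assoc, this]
    have h3 : ((a • (Pᵀ * Xᵀ)) * (a • (X * P))).trace = (K : ℝ) := by
      rw [Matrix.smul_mul, Matrix.mul_smul, smul_smul, Matrix.trace_smul, smul_eq_mul, ha2]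
      have : Pᵀ * Xᵀ * (X * P) = P * (Xᵀ * X) * P := by
        rw [hPt, Matrix.mul_assoc, Matrix.mul_assoc, Matrix.mul_assoc]
      rw [this, hX, Matrix.mul_one, hPP, htrP]
      field_simp
    rw [h1, h2, h3]
    ring
  -- Procrustes inequality: trace (Mᵀ * U) ≤ trace (Mᵀ * (W * Vᵀ))
  have hUV : (U * V)ᵀ * (U * V) = 1 := by
    rw [Matrix.transpose_mul, Matrix.mul_assoc, ← Matrix.mul_assoc Uᵀ, hU, Matrix.one_mul, hV]
  have htraceS : ∀ X : Matrix (Fin d) (Fin K) ℝ,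
      c * (Mᵀ * X).trace = (S * (Wᵀ * (X * V))).trace := by
    intro X
    have h0 : c * (Mᵀ * X).trace = ((c • M)ᵀ * X).trace := by
      rw [Matrix.transpose_smul, Matrix.smul_mul, Matrix.trace_smul, smul_eq_mul]
    have hTT : (W * S * Vᵀ)ᵀ = V * (S * Wᵀ) := by
      rw [Matrix.transpose_mul, Matrix.transpose_mul, Matrix.transpose_transpose, hSt]
    rw [h0, hcM, hTT]
    calc (V * (S * Wᵀ) * X).trace
        = (X * V * (S * Wᵀ)).trace := Matrix.trace_mul_cycle V (S * Wᵀ) X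
      _ = ((S * Wᵀ) * (X * V)).trace := Matrix.trace_mul_comm _ _
      _ = (S * (Wᵀ * (X * V))).trace := by rw [Matrix.mul_assoc]
  have hineq : (Mᵀ * U).trace ≤ (Mᵀ * (W * Vᵀ)).trace := by
    have h1 : c * (Mᵀ * U).trace ≤ c * (Mᵀ * (W * Vᵀ)).trace := by
      rw [htraceS U, htraceS (W * Vᵀ)]
      have hWVV : Wᵀ * (W * Vᵀ * V) = 1 := by
        rw [Matrix.mul_assoc, hV, Matrix.mul_one, hW]
      rw [hWVV, Matrix.mul_one]
      exact trace_SQ_le S (Wᵀ * (U * V)) hS hSnonneg (fun i => diag_le_one W (U * V) hW hUV i)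
    exact le_of_mul_le_mul_left h1 hcpos
  -- conclude
  have hWVt : (W * Vᵀ)ᵀ * (W * Vᵀ) = 1 := by
    rw [Matrix.transpose_mul, Matrix.transpose_transpose, Matrix.mul_assoc,
      ← Matrix.mul_assoc Wᵀ, hW, Matrix.one_mul, mul_eq_one_comm.mp hV]
  rw [hEstar]
  unfold frobNorm
  apply Real.sqrt_le_sqrt
  rw [key (W * Vᵀ) hWVt, key U hU]
  have : 2 * a * (Mᵀ * U).trace ≤ 2 * a * (Mᵀ * (W * Vᵀ)).trace := by
    apply mul_le_mul_of_nonneg_left hineq (by positivity)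
  linarith
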